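/- Let Γ be a smooth orientable hypersurface in ℝ^N with unit normal field ν extended to a tubular neighborhood, and let ψ:ℝ^N\{0}→(0,∞) be smooth, positively 1-homogeneous and convex. Then on Γ the normal derivative of the anisotropic mean curvature satisfies ∂_ν H^ψ = − trace(B^ψ B) = − trace(B²(∇²ψ∘ν)), where H^ψ = div(∇ψ∘ν), B^ψ = ∇(∇ψ∘ν), and B = ∇ν. -/

import Mathlib

open MeasureTheory Filter Topology

noncomputable section

namespace AnisoCurvature

/-- first partial derivatives of a scalar field on `ℝ^N`. -/
def pd (N : ℕ) (f : (Fin N → ℝ) → ℝ) (z : Fin N → ℝ) (j : Fin N) : ℝ :=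
  fderiv ℝ f z (Pi.single j 1)

/-- components of `∇ψ ∘ ν`. -/
def gpsnu (N : ℕ) (ψ : (Fin N → ℝ) → ℝ) (νf : (Fin N → ℝ) → Fin N → ℝ)
    (z : Fin N → ℝ) (i : Fin N) : ℝ :=
  fderiv ℝ ψ (νf z) (Pi.single i 1)

/-- the second fundamental form `B = ∇ν`. -/
def B (N : ℕ) (νf : (Fin N → ℝ) → Fin N → ℝ) (z : Fin N → ℝ) (i j : Fin N) : ℝ :=
  pd N (fun w => νf w i) z j

/-- the anisotropic second fundamental form `B^ψ = ∇(∇ψ∘ν)`. -/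
def Bpsi (N : ℕ) (ψ : (Fin N → ℝ) → ℝ) (νf : (Fin N → ℝ) → Fin N → ℝ)
    (z : Fin N → ℝ) (i j : Fin N) : ℝ :=
  pd N (fun w => gpsnu N ψ νf w i) z j

/-- the anisotropic mean curvature `H^ψ = div(∇ψ∘ν) = trace B^ψ`. -/
def Hpsi (N : ℕ) (ψ : (Fin N → ℝ) → ℝ) (νf : (Fin N → ℝ) → Fin N → ℝ)
    (z : Fin N → ℝ) : ℝ :=
  ∑ i, Bpsi N ψ νf z i i

/-- the Hessian matrix `∇²ψ(ν)`. -/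
def Hess (N : ℕ) (ψ : (Fin N → ℝ) → ℝ) (v : Fin N → ℝ) (i j : Fin N) : ℝ :=
  fderiv ℝ (fderiv ℝ ψ) v (Pi.single i 1) (Pi.single j 1)

/-- A continuous linear functional on `Fin N → ℝ` evaluated at a vector equals
the sum of coordinates times values on the basis vectors. -/
lemma clm_eval_sum {N : ℕ} (L : (Fin N → ℝ) →L[ℝ] ℝ) (u : Fin N → ℝ) :
    L u = ∑ j, u j * L (Pi.single j 1) := by
  have hu : u = ∑ j, u j • (Pi.single j 1 : Fin N → ℝ) := by
    funext k
    simp [Finset.sum_apply, Pi.single_apply]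
  calc L u = L (∑ j, u j • (Pi.single j 1 : Fin N → ℝ)) := by rw [← hu]
    _ = ∑ j, u j * L (Pi.single j 1) := by
        rw [map_sum]
        simp [smul_eq_mul]

/-- Reversing the order of bound variables in a triple sum. -/
lemma sum_rev {M : Type*} [AddCommMonoid M] {n : ℕ} (F : Fin n → Fin n → Fin n → M) :
    ∑ i, ∑ j, ∑ k, F i j k = ∑ i, ∑ j, ∑ k, F k j i := by
  calc ∑ i, ∑ j, ∑ k, F i j k
      = ∑ j, ∑ i, ∑ k, F i j k := Finset.sum_comm
    _ = ∑ j, ∑ k, ∑ i, F i j k := Finset.sum_congr rfl fun j _ => Finset.sum_comm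
    _ = ∑ k, ∑ j, ∑ i, F i j k := Finset.sum_comm

/-- Lemma `lem:identita`(a): for a smooth unit normal field `ν`
extended to a tubular neighborhood (so that `∇ν[ν] = 0`) and a smooth positively
`1`-homogeneous convex anisotropy `ψ`, one has
`∂_ν H^ψ = -trace(B^ψ B) = -trace(B²(∇²ψ∘ν))`. -/
theorem normal_derivative_of_anisotropic_mean_curvature
    (N : ℕ) (U : Set (Fin N → ℝ)) (hU : IsOpen U)
    (νf : (Fin N → ℝ) → Fin N → ℝ)
    (hν : ContDiffOn ℝ 2 νf U)
    (hunit : ∀ w ∈ U, (∑ i, (νf w i)^2) = 1)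
    (hext : ∀ w ∈ U, fderiv ℝ νf w (νf w) = 0)
    (ψ : (Fin N → ℝ) → ℝ)
    (hψ : ContDiffOn ℝ 3 ψ {(0 : Fin N → ℝ)}ᶜ)
    (hψpos : ∀ v : Fin N → ℝ, v ≠ 0 → 0 < ψ v)
    (hhom : ∀ (t : ℝ) (v : Fin N → ℝ), 0 < t → ψ (t • v) = t * ψ v)
    (hconv : ConvexOn ℝ Set.univ ψ) :
    ∀ z ∈ U,
      fderiv ℝ (Hpsi N ψ νf) z (νf z)
          = - ∑ i, ∑ j, Bpsi N ψ νf z i j * B N νf z j i ∧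
      (∑ i, ∑ j, Bpsi N ψ νf z i j * B N νf z j i)
          = ∑ i, ∑ j, ∑ k, B N νf z i j * B N νf z j k * Hess N ψ (νf z) k i := by
  intro z hz
  classical
  set e : Fin N → (Fin N → ℝ) := fun i => Pi.single i (1 : ℝ) with he
  set g : Fin N → (Fin N → ℝ) → ℝ := fun i w => gpsnu N ψ νf w i with hgdef
  -- basic regularity facts
  have hνc : ∀ w ∈ U, ContDiffAt ℝ 2 νf w := fun w hw => hν.contDiffAt (hU.mem_nhds hw)
  have hνd : ∀ w ∈ U, DifferentiableAt ℝ νf w := fun w hw =>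
    (hνc w hw).differentiableAt (by norm_num)
  have hνne : ∀ w ∈ U, νf w ≠ 0 := by
    intro w hw h0
    have h1 := hunit w hw
    rw [h0] at h1
    simp at h1
  have hψc : ∀ w ∈ U, ContDiffAt ℝ 3 ψ (νf w) := fun w hw =>
    hψ.contDiffAt (isOpen_compl_singleton.mem_nhds (by simpa using hνne w hw))
  have hDψ : ∀ w ∈ U, ContDiffAt ℝ 2 (fderiv ℝ ψ) (νf w) := fun w hw =>
    (hψc w hw).fderiv_right (by norm_num)
  -- g i is C² at each point of U
  have hgc : ∀ i, ∀ w ∈ U, ContDiffAt ℝ 2 (g i) w := by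
    intro i w hw
    exact ((hDψ w hw).comp w (hνc w hw)).clm_apply contDiffAt_const
  -- derivative of g i at w ∈ U via the chain rule
  have hgderiv : ∀ i, ∀ w ∈ U, HasFDerivAt (g i)
      ((ContinuousLinearMap.apply ℝ ℝ (e i)).comp
        ((fderiv ℝ (fderiv ℝ ψ) (νf w)).comp (fderiv ℝ νf w))) w := by
    intro i w hw
    have h1 : HasFDerivAt (fderiv ℝ ψ) (fderiv ℝ (fderiv ℝ ψ) (νf w)) (νf w) :=
      ((hDψ w hw).differentiableAt (by norm_num)).hasFDerivAt
    have h2 : HasFDerivAt νf (fderiv ℝ νf w) w := (hνd w hw).hasFDerivAt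
    exact (ContinuousLinearMap.apply ℝ ℝ (e i)).hasFDerivAt.comp w (h1.comp w h2)
  have hfg : ∀ i, ∀ w ∈ U, fderiv ℝ (g i) w =
      (ContinuousLinearMap.apply ℝ ℝ (e i)).comp
        ((fderiv ℝ (fderiv ℝ ψ) (νf w)).comp (fderiv ℝ νf w)) :=
    fun i w hw => (hgderiv i w hw).fderiv
  -- key vanishing: ∇(g i)[ν] = 0 on U
  have key0 : ∀ i, ∀ w ∈ U, fderiv ℝ (g i) w (νf w) = 0 := by
    intro i w hw
    rw [hfg i w hw]
    simp [hext w hw]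
  -- differentiability of the derivative field
  have hcd : ∀ i, DifferentiableAt ℝ (fderiv ℝ (g i)) z :=
    fun i => ((hgc i z hz).fderiv_right (m := 1) (by norm_num)).differentiableAt (by norm_num)
  -- symmetry of second derivatives of g i
  have hsym : ∀ i, IsSymmSndFDerivAt ℝ (g i) z :=
    fun i => (hgc i z hz).isSymmSndFDerivAt (by rw [minSmoothness_of_isRCLikeNormedField])
  -- key identity: D²(g i) z v (ν z) = - ∇(g i) z (∇ν z v)
  have keyD : ∀ i v, fderiv ℝ (fderiv ℝ (g i)) z v (νf z)
      = - fderiv ℝ (g i) z (fderiv ℝ νf z v) := by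
    intro i v
    have h0 : fderiv ℝ (fun w => fderiv ℝ (g i) w (νf w)) z = 0 := by
      have hev : (fun w => fderiv ℝ (g i) w (νf w)) =ᶠ[𝓝 z] fun _ => (0 : ℝ) := by
        filter_upwards [hU.mem_nhds hz] with w hw using key0 i w hw
      rw [hev.fderiv_eq]
      exact fderiv_const_apply 0
    have h1 := fderiv_clm_apply (hcd i) (hνd z hz)
    rw [h0] at h1
    have h3 := congrArg (fun (L : (Fin N → ℝ) →L[ℝ] ℝ) => L v) h1.symm
    simp only [ContinuousLinearMap.add_apply, ContinuousLinearMap.comp_apply,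
      ContinuousLinearMap.flip_apply, ContinuousLinearMap.zero_apply] at h3
    linarith
  -- coordinates of ∇ν
  have hB : ∀ (k j : Fin N), (fderiv ℝ νf z (e j)) k = B N νf z k j := by
    intro k j
    have hp : HasFDerivAt (fun w => νf w k)
        ((ContinuousLinearMap.proj (R := ℝ) (φ := fun _ : Fin N => ℝ) k).comp
          (fderiv ℝ νf z)) z :=
      (ContinuousLinearMap.proj (R := ℝ) (φ := fun _ : Fin N => ℝ) k).hasFDerivAt.comp z
        (hνd z hz).hasFDerivAt
    rw [B, pd, hp.fderiv]
    rfl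
  -- each diagonal term of the normal derivative of Hψ
  have hterm : ∀ i, fderiv ℝ (fun w => fderiv ℝ (g i) w (e i)) z (νf z)
      = - ∑ j, B N νf z j i * Bpsi N ψ νf z i j := by
    intro i
    rw [fderiv_clm_apply (hcd i) (differentiableAt_const (e i))]
    simp only [ContinuousLinearMap.add_apply, ContinuousLinearMap.comp_apply,
      fderiv_const, fderiv_fun_const, Pi.zero_apply, ContinuousLinearMap.comp_zero,
      ContinuousLinearMap.zero_apply, ContinuousLinearMap.flip_apply, zero_add]
    rw [hsym i (νf z) (e i), keyD i (e i), clm_eval_sum (fderiv ℝ (g i) z) (fderiv ℝ νf z (e i))]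
    congr 1
    refine Finset.sum_congr rfl fun j _ => ?_
    rw [hB j i]
    rfl
  -- Bψ in terms of B and the Hessian
  have hBpsi : ∀ i j, Bpsi N ψ νf z i j = ∑ k, B N νf z k j * Hess N ψ (νf z) k i := by
    intro i j
    show fderiv ℝ (g i) z (e j) = _
    rw [hfg i z hz]
    have hflip := clm_eval_sum ((fderiv ℝ (fderiv ℝ ψ) (νf z)).flip (e i)) (fderiv ℝ νf z (e j))
    simp only [ContinuousLinearMap.flip_apply] at hflip
    simp only [ContinuousLinearMap.comp_apply, ContinuousLinearMap.apply_apply]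
    rw [hflip]
    refine Finset.sum_congr rfl fun k _ => ?_
    rw [hB k j]
    rfl
  -- Hessian symmetry
  have hHs : ∀ i k, Hess N ψ (νf z) i k = Hess N ψ (νf z) k i := by
    intro i k
    exact (hψc z hz).isSymmSndFDerivAt (by rw [minSmoothness_of_isRCLikeNormedField]; norm_num) (e i) (e k)
  constructor
  · -- first identity
    have hHeq : Hpsi N ψ νf = fun w => ∑ i, fderiv ℝ (g i) w (e i) := rfl
    have hfH : fderiv ℝ (Hpsi N ψ νf) z
        = ∑ i, fderiv ℝ (fun w => fderiv ℝ (g i) w (e i)) z := by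
      rw [hHeq]
      exact fderiv_fun_sum fun i _ => (hcd i).clm_apply (differentiableAt_const _)
    rw [hfH, ContinuousLinearMap.sum_apply]
    have h4 : ∑ i, fderiv ℝ (fun w => fderiv ℝ (g i) w (e i)) z (νf z)
        = ∑ i, -∑ j, B N νf z j i * Bpsi N ψ νf z i j :=
      Finset.sum_congr rfl fun i _ => hterm i
    rw [h4, Finset.sum_neg_distrib]
    congr 1
    exact Finset.sum_congr rfl fun i _ => Finset.sum_congr rfl fun j _ => mul_comm _ _
  · -- second identity
    calc ∑ i, ∑ j, Bpsi N ψ νf z i j * B N νf z j i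
        = ∑ i, ∑ j, ∑ k, B N νf z k j * Hess N ψ (νf z) k i * B N νf z j i := by
          refine Finset.sum_congr rfl fun i _ => Finset.sum_congr rfl fun j _ => ?_
          rw [hBpsi i j, Finset.sum_mul]
      _ = ∑ i, ∑ j, ∑ k, B N νf z i j * Hess N ψ (νf z) i k * B N νf z j k :=
          sum_rev _
      _ = ∑ i, ∑ j, ∑ k, B N νf z i j * B N νf z j k * Hess N ψ (νf z) k i := by
          refine Finset.sum_congr rfl fun i _ => Finset.sum_congr rfl fun j _ =>
            Finset.sum_congr rfl fun k _ => ?_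
          rw [hHs i k]
          ring

end AnisoCurvature
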